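/- Define T(0) = 0 and T(n) = min_{1≤t≤n}{ α·T(n−t) + β·(2^t − 1) } for positive integers α, β. Then T(n) = β·Σ_{j=1}^{n} v_j, where (v_j)_{j≥1} is the nondecreasing enumeration with multiplicity of the numbers 2^i·α^j with i, j ≥ 0. -/

import Mathlib

/-- The nondecreasing enumeration `v` (on indices ≥ 1), with multiplicity,
of the numbers 2^i·α^j with i, j ≥ 0. -/
def IsTwoAlphaEnum (α : ℕ) (v : ℕ → ℕ) : Prop :=
  (∀ j, 1 ≤ j → v j ≤ v (j + 1)) ∧
  ∃ e : {j : ℕ // 1 ≤ j} ≃ (ℕ × ℕ),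
    ∀ j : {j : ℕ // 1 ≤ j}, v j.1 = 2 ^ (e j).1 * α ^ (e j).2

namespace TAux

open Finset

/-- value of a pair -/
def f (α : ℕ) (p : ℕ × ℕ) : ℕ := 2 ^ p.1 * α ^ p.2

lemma vmono {v : ℕ → ℕ} (h : ∀ j, 1 ≤ j → v j ≤ v (j + 1)) :
    ∀ {a b : ℕ}, 1 ≤ a → a ≤ b → v a ≤ v b := by
  intro a b ha hab
  induction b with
  | zero => omega
  | succ b ih =>
    rcases Nat.lt_or_ge a (b + 1) with h1 | h2
    · exact le_trans (ih (by omega)) (h b (by omega))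
    · have : a = b + 1 := by omega
      subst this; rfl

lemma sum_two_pow (t : ℕ) : ∑ k ∈ Finset.range t, 2 ^ k = 2 ^ t - 1 := by
  induction t with
  | zero => simp
  | succ t ih =>
    rw [Finset.sum_range_succ, ih, pow_succ]
    have : 1 ≤ 2 ^ t := Nat.one_le_two_pow
    omega

/-- sum of v over any finset of indices ≥ 1 dominates the sum over an initial segment -/
lemma sum_ge_sum_Icc {v : ℕ → ℕ} (h : ∀ j, 1 ≤ j → v j ≤ v (j + 1))
    (s : Finset ℕ) (hs : ∀ j ∈ s, 1 ≤ j) :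
    ∑ j ∈ Finset.Icc 1 s.card, v j ≤ ∑ j ∈ s, v j := by
  classical
  set m := s.card with hm
  set emb := s.orderEmbOfFin hm.symm with hemb
  have key : ∀ (k : ℕ) (hk : k < m), k + 1 ≤ emb ⟨k, hk⟩ := by
    intro k
    induction k with
    | zero =>
      intro hk
      exact hs _ (s.orderEmbOfFin_mem hm.symm ⟨0, hk⟩)
    | succ k ih =>
      intro hk
      have h1 : k < m := by omega
      have h2 := emb.strictMono (show (⟨k, h1⟩ : Fin m) < ⟨k + 1, hk⟩ from by
        simp [Fin.lt_def])
      have h3 := ih h1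
      omega
  have himg : Finset.image emb Finset.univ = s := by
    apply Finset.coe_injective
    rw [Finset.coe_image, Finset.coe_univ, Set.image_univ, Finset.range_orderEmbOfFin]
  have h1 : ∑ j ∈ s, v j = ∑ k : Fin m, v (emb k) := by
    rw [← himg, Finset.sum_image (fun x _ y _ hxy => emb.injective hxy)]
  have h2 : ∑ j ∈ Finset.Icc 1 m, v j = ∑ k : Fin m, v (k + 1 : ℕ) := by
    have hi : Finset.Icc 1 m = (Finset.range m).image (· + 1) := by
      ext x
      simp only [Finset.mem_Icc, Finset.mem_image, Finset.mem_range]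
      constructor
      · rintro ⟨h1, h2⟩; exact ⟨x - 1, by omega, by omega⟩
      · rintro ⟨a, ha, rfl⟩; omega
    rw [hi, Finset.sum_image (by intro x _ y _ hxy; simp only at hxy; omega), ← Fin.sum_univ_eq_sum_range]
  rw [h1, h2]
  apply Finset.sum_le_sum
  intro k _
  exact vmono h (by omega) (key k.1 k.2)

/-- sum of values over any finset of pairs of card m dominates β-free partial sum -/
lemma sum_pairs_ge {α : ℕ} {v : ℕ → ℕ} (h : ∀ j, 1 ≤ j → v j ≤ v (j + 1))
    (e : {j : ℕ // 1 ≤ j} ≃ ℕ × ℕ) (he : ∀ j, v j.1 = f α (e j))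
    (s : Finset (ℕ × ℕ)) :
    ∑ j ∈ Finset.Icc 1 s.card, v j ≤ ∑ p ∈ s, f α p := by
  classical
  have hinj : ∀ p ∈ s, ∀ q ∈ s, (e.symm p).1 = (e.symm q).1 → p = q := by
    intro p _ q _ hpq
    have : e.symm p = e.symm q := Subtype.ext hpq
    exact e.symm.injective this
  have hcard : (s.image fun p => (e.symm p).1).card = s.card :=
    Finset.card_image_of_injOn (fun p hp q hq => hinj p hp q hq)
  have hsum : ∑ j ∈ s.image (fun p => (e.symm p).1), v j = ∑ p ∈ s, f α p := by
    rw [Finset.sum_image hinj]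
    refine Finset.sum_congr rfl fun p _ => ?_
    have := he (e.symm p)
    rwa [Equiv.apply_symm_apply] at this
  rw [← hcard, ← hsum]
  refine sum_ge_sum_Icc h _ fun j hj => ?_
  obtain ⟨p, _, rfl⟩ := Finset.mem_image.1 hj
  exact (e.symm p).2

/-- embedding of positive naturals into pairs, as a plain function -/
def ee (e : {j : ℕ // 1 ≤ j} ≃ ℕ × ℕ) (j : ℕ) : ℕ × ℕ :=
  e ⟨max 1 j, le_max_left 1 j⟩

lemma ee_injOn {e : {j : ℕ // 1 ≤ j} ≃ ℕ × ℕ} {m : ℕ} :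
    ∀ j ∈ Finset.Icc 1 m, ∀ k ∈ Finset.Icc 1 m, ee e j = ee e k → j = k := by
  intro j hj k hk hjk
  simp only [Finset.mem_Icc] at hj hk
  have := e.injective hjk
  have : max 1 j = max 1 k := congrArg Subtype.val this
  omega

lemma ee_spec {α : ℕ} {v : ℕ → ℕ} (e : {j : ℕ // 1 ≤ j} ≃ ℕ × ℕ)
    (he : ∀ j, v j.1 = f α (e j)) {j : ℕ} (hj : 1 ≤ j) :
    f α (ee e j) = v j := by
  unfold ee
  have h1 : (⟨max 1 j, le_max_left 1 j⟩ : {j : ℕ // 1 ≤ j}) = ⟨j, hj⟩ := Subtype.ext (by show max 1 j = j; omega)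
  rw [h1, ← he ⟨j, hj⟩]

lemma sum_Icc_eq_image {α : ℕ} {v : ℕ → ℕ} (e : {j : ℕ // 1 ≤ j} ≃ ℕ × ℕ)
    (he : ∀ j, v j.1 = f α (e j)) (m : ℕ) :
    ∑ p ∈ (Finset.Icc 1 m).image (ee e), f α p = ∑ j ∈ Finset.Icc 1 m, v j := by
  rw [Finset.sum_image ee_injOn]
  exact Finset.sum_congr rfl fun j hj => ee_spec e he (Finset.mem_Icc.1 hj).1

lemma card_Icc_image {e : {j : ℕ // 1 ≤ j} ≃ ℕ × ℕ} (m : ℕ) :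
    ((Finset.Icc 1 m).image (ee e)).card = m := by
  rw [Finset.card_image_of_injOn (fun j hj k hk => ee_injOn j hj k hk)]
  simp


def σ (p : ℕ × ℕ) : ℕ × ℕ := (p.1, p.2 + 1)

lemma f_sigma (α : ℕ) (p : ℕ × ℕ) : f α (σ p) = α * f α p := by
  simp only [f, σ, pow_succ]; ring

lemma sigma_inj : Function.Injective σ := by
  intro p q h
  simp only [σ, Prod.mk.injEq] at h
  exact Prod.ext h.1 (by omega)

/-- lower bound step: every candidate value dominates the target sum -/
lemma step_lower {α : ℕ} {v : ℕ → ℕ} (h : ∀ j, 1 ≤ j → v j ≤ v (j + 1))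
    (e : {j : ℕ // 1 ≤ j} ≃ ℕ × ℕ) (he : ∀ j, v j.1 = f α (e j))
    {n t : ℕ} (ht1 : 1 ≤ t) (htn : t ≤ n) :
    ∑ j ∈ Finset.Icc 1 n, v j ≤ α * ∑ j ∈ Finset.Icc 1 (n - t), v j + (2 ^ t - 1) := by
  classical
  set E : Finset (ℕ × ℕ) := (Finset.Icc 1 (n - t)).image (ee e) with hE
  set F : Finset (ℕ × ℕ) := E.image σ ∪ (Finset.range t).image (fun k => (k, 0)) with hF
  have hdisj : Disjoint (E.image σ) ((Finset.range t).image (fun k => (k, 0))) := by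
    rw [Finset.disjoint_left]
    intro p hp hq
    obtain ⟨q, _, rfl⟩ := Finset.mem_image.1 hp
    obtain ⟨k, _, hk⟩ := Finset.mem_image.1 hq
    have : q.2 + 1 = 0 := by
      have := congrArg Prod.snd hk
      simpa [σ] using this.symm
    omega
  have inj2 : Function.Injective (fun k => ((k, 0) : ℕ × ℕ)) := by
    intro a b hab; simpa using hab
  have c1 : (E.image σ).card = n - t := by
    rw [Finset.card_image_of_injective _ sigma_inj, hE, card_Icc_image]
  have c2 : ((Finset.range t).image (fun k => ((k, 0) : ℕ × ℕ))).card = t := by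
    rw [Finset.card_image_of_injective _ inj2, Finset.card_range]
  have hcardF : F.card = n := by
    rw [hF, Finset.card_union_of_disjoint hdisj, c1, c2]; omega
  have s1 : ∑ p ∈ E.image σ, f α p = α * ∑ j ∈ Finset.Icc 1 (n - t), v j := by
    rw [Finset.sum_image (fun x _ y _ hxy => sigma_inj hxy)]
    have : ∀ p ∈ E, f α (σ p) = α * f α p := fun p _ => f_sigma α p
    rw [Finset.sum_congr rfl this, ← Finset.mul_sum, hE, sum_Icc_eq_image e he]
  have s2 : ∑ p ∈ (Finset.range t).image (fun k => ((k, 0) : ℕ × ℕ)), f α p = 2 ^ t - 1 := by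
    rw [Finset.sum_image (fun x _ y _ hxy => inj2 hxy), ← sum_two_pow t]
    exact Finset.sum_congr rfl fun k _ => by simp [f]
  have hsumF : ∑ p ∈ F, f α p = α * ∑ j ∈ Finset.Icc 1 (n - t), v j + (2 ^ t - 1) := by
    rw [hF, Finset.sum_union hdisj, s1, s2]
  calc ∑ j ∈ Finset.Icc 1 n, v j = ∑ j ∈ Finset.Icc 1 F.card, v j := by rw [hcardF]
    _ ≤ ∑ p ∈ F, f α p := sum_pairs_ge h e he F
    _ = _ := hsumF

/-- upper bound step: some candidate t achieves at most the target sum -/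
lemma step_upper {α : ℕ} {v : ℕ → ℕ} (hα : 2 ≤ α) (h : ∀ j, 1 ≤ j → v j ≤ v (j + 1))
    (e : {j : ℕ // 1 ≤ j} ≃ ℕ × ℕ) (he : ∀ j, v j.1 = f α (e j))
    {n : ℕ} (hn : 1 ≤ n) :
    ∃ t, 1 ≤ t ∧ t ≤ n ∧
      α * ∑ j ∈ Finset.Icc 1 (n - t), v j + (2 ^ t - 1) ≤ ∑ j ∈ Finset.Icc 1 n, v j := by
  classical
  set S : Finset (ℕ × ℕ) := (Finset.Icc 1 n).image (ee e) with hS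
  have hcardS : S.card = n := card_Icc_image n
  -- anything outside S has value at least anything inside S
  have hout : ∀ p ∉ S, ∀ q ∈ S, f α q ≤ f α p := by
    intro p hp q hq
    have hjp : n < (e.symm p).1 := by
      by_contra hle
      push_neg at hle
      apply hp
      rw [hS]
      refine Finset.mem_image.2 ⟨(e.symm p).1, Finset.mem_Icc.2 ⟨(e.symm p).2, hle⟩, ?_⟩
      unfold ee
      have : (⟨max 1 (e.symm p).1, le_max_left _ _⟩ : {j : ℕ // 1 ≤ j}) = e.symm p :=
        Subtype.ext (by have := (e.symm p).2; show max 1 (e.symm p).1 = (e.symm p).1; omega)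
      rw [this, Equiv.apply_symm_apply]
    obtain ⟨j, hj, rfl⟩ := Finset.mem_image.1 hq
    rw [Finset.mem_Icc] at hj
    have hq1 : f α (ee e j) = v j := ee_spec e he hj.1
    have hp1 : f α p = v (e.symm p).1 := by
      have := he (e.symm p)
      rw [Equiv.apply_symm_apply] at this
      exact this.symm
    rw [hq1, hp1]
    exact vmono h hj.1 (by omega)
  -- (0,0) belongs to S
  have h00 : ((0, 0) : ℕ × ℕ) ∈ S := by
    by_contra h00
    have hmem : ee e 1 ∈ S := by
      rw [hS]; exact Finset.mem_image_of_mem _ (Finset.mem_Icc.2 ⟨le_refl 1, hn⟩)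
    have hle : f α (ee e 1) ≤ f α (0, 0) := hout _ h00 _ hmem
    have hf1 : f α ((0, 0) : ℕ × ℕ) = 1 := by simp [f]
    rw [hf1] at hle
    set q := ee e 1 with hq
    have h2 : 1 ≤ 2 ^ q.1 := Nat.one_le_two_pow
    have h3 : 1 ≤ α ^ q.2 := Nat.one_le_pow _ _ (by omega)
    have hfq : f α q = 2 ^ q.1 * α ^ q.2 := rfl
    have h4 : 2 ^ q.1 = 1 ∧ α ^ q.2 = 1 := by
      constructor <;> nlinarith [hle, hfq]
    have h5 : q.1 = 0 := by
      by_contra hne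
      have : 2 ^ 1 ≤ 2 ^ q.1 := Nat.pow_le_pow_right (by omega) (by omega)
      omega
    have h6 : q.2 = 0 := by
      by_contra hne
      have : α ^ 1 ≤ α ^ q.2 := Nat.pow_le_pow_right (by omega) (by omega)
      simp only [pow_one] at this
      omega
    apply h00
    have : q = (0, 0) := Prod.ext h5 h6
    rwa [← this]
  set row0 : Finset (ℕ × ℕ) := S.filter (fun p => p.2 = 0) with hrow0
  set t := row0.card with ht
  have ht1 : 1 ≤ t := Finset.card_pos.2 ⟨(0, 0), Finset.mem_filter.2 ⟨h00, rfl⟩⟩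
  have htn : t ≤ n := hcardS ▸ Finset.card_filter_le _ _
  -- the first coordinates of row0 form an initial segment
  have hrow_mem : ∀ p ∈ row0, p = (p.1, 0) := by
    intro p hp
    have := (Finset.mem_filter.1 hp).2
    exact Prod.ext rfl (by simpa using this)
  have hdown : ∀ k, (k, 0) ∈ S → ∀ l, l < k → ((l, 0) : ℕ × ℕ) ∈ S := by
    intro k hk l hl
    by_contra hls
    have := hout _ hls _ hk
    simp only [f] at this
    have h2 : (2:ℕ) ^ l < 2 ^ k := Nat.pow_lt_pow_right (by omega) hl
    simp only [pow_zero, mul_one] at this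
    omega
  have hr : row0.image Prod.fst = Finset.range t := by
    have hinj : ∀ p ∈ row0, ∀ q ∈ row0, p.1 = q.1 → p = q := by
      intro p hp q hq hpq
      rw [hrow_mem p hp, hrow_mem q hq, hpq]
    have hcard : (row0.image Prod.fst).card = t := Finset.card_image_of_injOn hinj
    have hsub : row0.image Prod.fst ⊆ Finset.range t := by
      intro k hk
      obtain ⟨p, hp, rfl⟩ := Finset.mem_image.1 hk
      have hks : (p.1, 0) ∈ S := by
        rw [← hrow_mem p hp]; exact (Finset.mem_filter.1 hp).1
      have hicc : Finset.Icc 0 p.1 ⊆ row0.image Prod.fst := by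
        intro l hl
        rw [Finset.mem_Icc] at hl
        rcases Nat.lt_or_ge l p.1 with h1 | h2
        · have hls : ((l, 0) : ℕ × ℕ) ∈ S := hdown _ hks _ h1
          exact Finset.mem_image.2 ⟨(l, 0), Finset.mem_filter.2 ⟨hls, rfl⟩, rfl⟩
        · have : l = p.1 := by omega
          subst this
          exact Finset.mem_image.2 ⟨p, hp, rfl⟩
      have := Finset.card_le_card hicc
      rw [Nat.card_Icc] at this
      rw [Finset.mem_range]
      omega
    exact Finset.eq_of_subset_of_card_le hsub (by rw [Finset.card_range, hcard])
  have hrow0_eq : row0 = (Finset.range t).image (fun k => ((k, 0) : ℕ × ℕ)) := by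
    rw [← hr]
    ext p
    constructor
    · intro hp
      obtain hp2 := hrow_mem p hp
      exact Finset.mem_image.2 ⟨p.1, Finset.mem_image_of_mem _ hp, hp2.symm⟩
    · intro hp
      obtain ⟨k, hk, rfl⟩ := Finset.mem_image.1 hp
      obtain ⟨q, hq, rfl⟩ := Finset.mem_image.1 hk
      rwa [← hrow_mem q hq]
  -- the rest R and its shift
  set R : Finset (ℕ × ℕ) := S.filter (fun p => ¬ p.2 = 0) with hR
  have hcards : t + R.card = n := by
    rw [ht, hrow0, hR, ← hcardS]
    exact Finset.card_filter_add_card_filter_not _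
  set R' : Finset (ℕ × ℕ) := R.image (fun p => (p.1, p.2 - 1)) with hR'
  have hRinj : ∀ p ∈ R, ∀ q ∈ R, (p.1, p.2 - 1) = (q.1, q.2 - 1) → p = q := by
    intro p hp q hq hpq
    have hp2 := (Finset.mem_filter.1 hp).2
    have hq2 := (Finset.mem_filter.1 hq).2
    simp only [Prod.mk.injEq] at hpq
    exact Prod.ext hpq.1 (by omega)
  have hcardR' : R'.card = n - t := by
    rw [hR', Finset.card_image_of_injOn hRinj]; omega
  have hsumR : ∑ p ∈ R, f α p = α * ∑ q ∈ R', f α q := by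
    rw [hR', Finset.sum_image hRinj, Finset.mul_sum]
    refine Finset.sum_congr rfl fun p hp => ?_
    have hp2 := (Finset.mem_filter.1 hp).2
    simp only [f]
    have : α ^ p.2 = α * α ^ (p.2 - 1) := by
      conv_lhs => rw [show p.2 = (p.2 - 1) + 1 by omega]
      rw [pow_succ]; ring
    rw [this]; ring
  have hsumrow0 : ∑ p ∈ row0, f α p = 2 ^ t - 1 := by
    rw [hrow0_eq, Finset.sum_image (fun x _ y _ hxy => by simpa using hxy), ← sum_two_pow t]
    exact Finset.sum_congr rfl fun k _ => by simp [f]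
  have hsplit : ∑ p ∈ S, f α p = (2 ^ t - 1) + ∑ p ∈ R, f α p := by
    rw [← hsumrow0, hrow0, hR]
    exact (Finset.sum_filter_add_sum_filter_not S _ _).symm
  refine ⟨t, ht1, htn, ?_⟩
  have hSsum : ∑ p ∈ S, f α p = ∑ j ∈ Finset.Icc 1 n, v j := by
    rw [hS]; exact sum_Icc_eq_image e he n
  have hlow : ∑ j ∈ Finset.Icc 1 (n - t), v j ≤ ∑ q ∈ R', f α q := by
    have := sum_pairs_ge h e he R'
    rwa [hcardR'] at this
  have := Nat.mul_le_mul_left α hlow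
  omega

lemma alpha_ne_one {v : ℕ → ℕ} (hv : IsTwoAlphaEnum 1 v) : False := by
  obtain ⟨hmono, e, he⟩ := hv
  have hva : v (e.symm (1, 0)).1 = 2 := by
    rw [he (e.symm (1, 0)), Equiv.apply_symm_apply]
    norm_num
  have hinj : Function.Injective (fun k : ℕ => (e.symm (0, k)).1) := by
    intro x y hxy
    have h1 : e.symm (0, x) = e.symm (0, y) := Subtype.ext hxy
    have h2 := e.symm.injective h1
    simpa using h2
  have hinf : (Set.range fun k : ℕ => (e.symm (0, k)).1).Infinite :=
    Set.infinite_range_of_injective hinj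
  obtain ⟨b, hb, hab⟩ := hinf.exists_gt (e.symm (1, 0)).1
  obtain ⟨k, rfl⟩ := hb
  have hvb : v (e.symm (0, k)).1 = 1 := by
    rw [he (e.symm (0, k)), Equiv.apply_symm_apply]
    norm_num
  have hvb' : v ((fun k : ℕ => (e.symm (0, k)).1) k) = 1 := hvb
  have := vmono hmono (e.symm (1, 0)).2 (le_of_lt hab)
  omega

end TAux

/-- T(n) = min{α·T(n−t) + β·(2^t − 1)} satisfies T(n) = β·Σ_{j=1}^{n} v_j,
where (v_j) enumerates the numbers 2^i·α^j in nondecreasing order. -/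
theorem T_recurrence_sum_formula
    (α β : ℕ) (hα : 1 ≤ α) (hβ : 1 ≤ β)
    (T : ℕ → ℕ) (hT0 : T 0 = 0)
    (hT : ∀ n, 1 ≤ n →
      T n = sInf {w | ∃ t, 1 ≤ t ∧ t ≤ n ∧ w = α * T (n - t) + β * (2 ^ t - 1)})
    (v : ℕ → ℕ) (hv : IsTwoAlphaEnum α v)
    (n : ℕ) (hn : 1 ≤ n) :
    T n = β * ∑ j ∈ Finset.Icc 1 n, v j := by
  rcases Nat.lt_or_ge α 2 with hα2 | hα2
  · have hα1 : α = 1 := by omega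
    subst hα1
    exact (TAux.alpha_ne_one hv).elim
  obtain ⟨hmono, e, he⟩ := hv
  have he' : ∀ j : {j : ℕ // 1 ≤ j}, v j.1 = TAux.f α (e j) := he
  have main : ∀ n, T n = β * ∑ j ∈ Finset.Icc 1 n, v j := by
    intro n
    induction n using Nat.strong_induction_on with
    | _ n ih =>
      rcases Nat.eq_zero_or_pos n with rfl | hn1
      · simpa using hT0
      · apply le_antisymm
        · obtain ⟨t, ht1, htn, hle⟩ := TAux.step_upper hα2 hmono e he' hn1
          rw [hT n hn1]
          have hw : α * T (n - t) + β * (2 ^ t - 1) ∈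
              {w | ∃ t, 1 ≤ t ∧ t ≤ n ∧ w = α * T (n - t) + β * (2 ^ t - 1)} :=
            ⟨t, ht1, htn, rfl⟩
          refine le_trans (Nat.sInf_le hw) ?_
          rw [ih (n - t) (by omega)]
          set X := ∑ j ∈ Finset.Icc 1 (n - t), v j with hX
          set c := 2 ^ t - 1 with hc
          have hring : α * (β * X) + β * c = β * (α * X + c) := by ring
          rw [hring]
          exact Nat.mul_le_mul_left β hle
        · rw [hT n hn1]
          refine le_csInf ⟨_, ⟨n, hn1, le_refl n, rfl⟩⟩ ?_
          rintro w ⟨t, ht1, htn, rfl⟩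
          rw [ih (n - t) (by omega)]
          have hsl := TAux.step_lower hmono e he' ht1 htn
          have h2 := Nat.mul_le_mul_left β hsl
          set X := ∑ j ∈ Finset.Icc 1 (n - t), v j with hX
          set c := 2 ^ t - 1 with hc
          have hring : β * (α * X + c) = α * (β * X) + β * c := by ring
          rw [hring] at h2
          exact h2
  exact main n
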